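/- Let I = [0,1], φ₁,…,φ_m : I → ℝ continuous, T = {t₁,…,t_k} ⊂ I distinct with pairwise disjoint T_{i,ε} = [tᵢ−ε, tᵢ+ε] ∩ I and T_ε = ∪ᵢ T_{i,ε}. Let χ = ∑_i aᵢ δ_{tᵢ} with aᵢ ≥ 0, let x̂ be a nonnegative finite measure on I with (∑_j (∫ φ_j dx̂ − ∫ φ_j dχ)²)^{1/2} ≤ 2δ′, and let h = x̂ − χ (a signed measure). Let f : [−ε,ε] → ℝ with f(0) = 0 and f̄ ∈ ℝ. Assume: (a) there is b ∈ ℝ^m such that q = ∑_j b_j φ_j satisfies q(tᵢ) = 0, q ≥ f̄ on I \ T_ε, and q(t) ≥ f(t − tᵢ) on T_{i,ε}; (b) with sᵢ = sign(h(T_{i,ε})) ∈ {−1, +1}, there is b⁰ ∈ ℝ^m such that q⁰ = ∑_j b⁰_j φ_j satisfies q⁰(tᵢ) = sᵢ for all i, sᵢ − q⁰(t) ≤ f(t − tᵢ) for all t ∈ T_{i,ε}, and |q⁰(t)| ≤ f̄ for all t ∈ I \ T_ε. Then ∑_{i=1}^k |h(T_{i,ε})| ≤ 2(‖b‖₂ +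 ‖b⁰‖₂) δ′. -/

import Mathlib

open MeasureTheory Set

/-- The `ε`-neighbourhood `T_{i,ε} = [tᵢ-ε, tᵢ+ε] ∩ [0,1]` of a point `tᵢ`. -/
def nbhd (ti ε : ℝ) : Set ℝ := Icc (ti - ε) (ti + ε) ∩ Icc 0 1

/-- **Mass-discrepancy bound from two dual certificates (Lemma: dual 3).**
With a nonnegativity certificate `q = ∑ bⱼ φⱼ` and a sign-pattern certificate
`q⁰ = ∑ b⁰ⱼ φⱼ` interpolating the signs `sᵢ` of `h(T_{i,ε}) = xhat(T_{i,ε}) - aᵢ`,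
one has `∑ᵢ |h(T_{i,ε})| ≤ 2(‖b‖₂ + ‖b⁰‖₂) δ'`. -/
theorem sign_certificate_mass_bound
    (m k : ℕ) (ε δ' : ℝ) (hε : 0 < ε)
    (φ : Fin m → ℝ → ℝ) (hφ : ∀ j, ContinuousOn (φ j) (Icc (0:ℝ) 1))
    (t : Fin k → ℝ) (ht : ∀ i, t i ∈ Icc (0:ℝ) 1)
    (htinj : Function.Injective t)
    (hdisj : Pairwise fun i i' : Fin k => Disjoint (nbhd (t i) ε) (nbhd (t i') ε))
    (a : Fin k → ℝ) (ha : ∀ i, 0 ≤ a i)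
    (χ : Measure ℝ)
    (hχ : χ = ∑ i, ENNReal.ofReal (a i) • Measure.dirac (t i))
    (xhat : Measure ℝ) [IsFiniteMeasure xhat]
    (hsupp : xhat (Icc (0:ℝ) 1)ᶜ = 0)
    (hfeas : Real.sqrt (∑ j, (∫ s in Icc (0:ℝ) 1, φ j s ∂xhat
        - ∫ s in Icc (0:ℝ) 1, φ j s ∂χ) ^ 2) ≤ 2 * δ')
    (f : ℝ → ℝ) (hf0 : f 0 = 0) (fbar : ℝ)
    -- (a) the nonnegativity dual certificate q = ∑ⱼ bⱼ φⱼ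
    (b : Fin m → ℝ)
    (hq_zero : ∀ i, ∑ j, b j * φ j (t i) = 0)
    (hq_far : ∀ s ∈ Icc (0:ℝ) 1 \ ⋃ i, nbhd (t i) ε, fbar ≤ ∑ j, b j * φ j s)
    (hq_near : ∀ i, ∀ s ∈ nbhd (t i) ε, f (s - t i) ≤ ∑ j, b j * φ j s)
    -- (b) the sign-pattern dual certificate q⁰ = ∑ⱼ b⁰ⱼ φⱼ for the signs sᵢ
    (sgn : Fin k → ℝ)
    (hsgn_pm : ∀ i, sgn i = 1 ∨ sgn i = -1)
    (hsgn : ∀ i, sgn i * ((xhat (nbhd (t i) ε)).toReal - a i)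
      = |(xhat (nbhd (t i) ε)).toReal - a i|)
    (b₀ : Fin m → ℝ)
    (hq0_interp : ∀ i, ∑ j, b₀ j * φ j (t i) = sgn i)
    (hq0_near : ∀ i, ∀ s ∈ nbhd (t i) ε, sgn i - ∑ j, b₀ j * φ j s ≤ f (s - t i))
    (hq0_far : ∀ s ∈ Icc (0:ℝ) 1 \ ⋃ i, nbhd (t i) ε, |∑ j, b₀ j * φ j s| ≤ fbar) :
    ∑ i, |(xhat (nbhd (t i) ε)).toReal - a i|
      ≤ 2 * (Real.sqrt (∑ j, (b j) ^ 2) + Real.sqrt (∑ j, (b₀ j) ^ 2)) * δ' := by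
  classical
  set I1 : Set ℝ := Icc (0:ℝ) 1 with hI1def
  have hI1m : MeasurableSet I1 := measurableSet_Icc
  have hTm : ∀ i, MeasurableSet (nbhd (t i) ε) := fun i =>
    measurableSet_Icc.inter measurableSet_Icc
  have hTsub : ∀ i, nbhd (t i) ε ⊆ I1 := fun i => inter_subset_right
  -- integrability of the φ j on I1 w.r.t. xhat
  have hint : ∀ j, IntegrableOn (φ j) I1 xhat := fun j =>
    (hφ j).integrableOn_compact isCompact_Icc
  set Q : ℝ → ℝ := fun s => ∑ j, b j * φ j s with hQdef
  set Q0 : ℝ → ℝ := fun s => ∑ j, b₀ j * φ j s with hQ0def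
  have hQint : IntegrableOn Q I1 xhat :=
    integrable_finset_sum _ (fun j _ => (hint j).const_mul (b j))
  have hQ0int : IntegrableOn Q0 I1 xhat :=
    integrable_finset_sum _ (fun j _ => (hint j).const_mul (b₀ j))
  have hGint : IntegrableOn (fun s => Q s + Q0 s) I1 xhat := hQint.add hQ0int
  -- integrability w.r.t. the dirac components of χ
  have hdint : ∀ (g : ℝ → ℝ) (i : Fin k),
      Integrable g (ENNReal.ofReal (a i) • Measure.dirac (t i)) := fun g i =>
    Integrable.smul_measure
      ((integrable_congr (ae_eq_dirac g)).mpr (integrable_const _)) ENNReal.ofReal_ne_top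
  -- χ is supported on I1
  have hχI : χ.restrict I1 = χ := by
    rw [hχ]
    refine Measure.restrict_eq_self_of_ae_mem ?_
    rw [ae_iff]
    have : {x : ℝ | ¬ x ∈ I1} = I1ᶜ := rfl
    rw [this, Measure.finset_sum_apply]
    refine Finset.sum_eq_zero fun i _ => ?_
    rw [Measure.smul_apply, Measure.dirac_apply,
      Set.indicator_of_notMem (notMem_compl_iff.2 (ht i)), smul_zero]
  -- the χ-integrals
  have hχint : ∀ j, ∫ s in I1, φ j s ∂χ = ∑ i, a i * φ j (t i) := by
    intro j
    rw [hχI, hχ, integral_finset_sum_measure (fun i _ => hdint (φ j) i)]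
    refine Finset.sum_congr rfl fun i _ => ?_
    rw [integral_smul_measure, integral_dirac, ENNReal.toReal_ofReal (ha i), smul_eq_mul]
  set A : Fin m → ℝ := fun j => ∫ s in I1, φ j s ∂xhat with hAdef
  set v : Fin m → ℝ := fun j => A j - ∑ i, a i * φ j (t i) with hvdef
  have hfeas' : Real.sqrt (∑ j, v j ^ 2) ≤ 2 * δ' := by
    have : ∀ j, ∫ s in I1, φ j s ∂xhat - ∫ s in I1, φ j s ∂χ = v j := fun j => by
      rw [hχint j]
    simpa only [this] using hfeas
  have h2δ : (0:ℝ) ≤ 2 * δ' := le_trans (Real.sqrt_nonneg _) hfeas'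
  -- integral of Q over I1 w.r.t. xhat
  have hQA : ∫ s in I1, Q s ∂xhat = ∑ j, b j * A j := by
    rw [integral_finset_sum _ (fun j _ => (hint j).const_mul (b j))]
    exact Finset.sum_congr rfl fun j _ => by rw [integral_const_mul]
  have hQ0A : ∫ s in I1, Q0 s ∂xhat = ∑ j, b₀ j * A j := by
    rw [integral_finset_sum _ (fun j _ => (hint j).const_mul (b₀ j))]
    exact Finset.sum_congr rfl fun j _ => by rw [integral_const_mul]
  -- swap-sum computations
  have hswap : ∀ c : Fin m → ℝ,
      ∑ j, c j * (∑ i, a i * φ j (t i)) = ∑ i, a i * (∑ j, c j * φ j (t i)) := by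
    intro c
    simp_rw [Finset.mul_sum]
    rw [Finset.sum_comm]
    exact Finset.sum_congr rfl fun i _ => Finset.sum_congr rfl fun j _ => by ring
  have hbA : ∑ j, b j * A j = ∑ j, b j * v j := by
    simp only [hvdef, mul_sub, Finset.sum_sub_distrib, hswap b]
    simp [hq_zero]
  have hb0A : ∑ j, b₀ j * A j = ∑ j, b₀ j * v j + ∑ i, a i * sgn i := by
    simp only [hvdef, mul_sub, Finset.sum_sub_distrib, hswap b₀]
    simp [hq0_interp]
  -- the key integral inequality
  set Tε : Set ℝ := ⋃ i, nbhd (t i) ε with hTedef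
  have hTεm : MeasurableSet Tε := MeasurableSet.iUnion fun i => hTm i
  have hTεsub : Tε ⊆ I1 := iUnion_subset hTsub
  have key : ∑ i, sgn i * (xhat (nbhd (t i) ε)).toReal
      ≤ ∫ s in I1, (Q s + Q0 s) ∂xhat := by
    have hsplit : ∫ s in Tε, (Q s + Q0 s) ∂xhat + ∫ s in I1 \ Tε, (Q s + Q0 s) ∂xhat
        = ∫ s in I1, (Q s + Q0 s) ∂xhat := by
      have h := integral_inter_add_diff (μ := xhat) (s := I1) (t := Tε) hTεm hGint
      rwa [inter_eq_self_of_subset_right hTεsub] at h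
    have h1 : ∫ s in Tε, (Q s + Q0 s) ∂xhat
        = ∑ i, ∫ s in nbhd (t i) ε, (Q s + Q0 s) ∂xhat :=
      integral_iUnion_fintype hTm hdisj (fun i => hGint.mono_set (hTsub i))
    have h2 : ∀ i, sgn i * (xhat (nbhd (t i) ε)).toReal
        ≤ ∫ s in nbhd (t i) ε, (Q s + Q0 s) ∂xhat := by
      intro i
      have hconst : ∫ _ in nbhd (t i) ε, sgn i ∂xhat
          = (xhat (nbhd (t i) ε)).toReal • sgn i := setIntegral_const _
      have hmono : ∫ _ in nbhd (t i) ε, sgn i ∂xhat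
          ≤ ∫ s in nbhd (t i) ε, (Q s + Q0 s) ∂xhat := by
        refine setIntegral_mono_on
          (integrableOn_const (measure_ne_top _ _))
          (hGint.mono_set (hTsub i)) (hTm i) ?_
        intro s hs
        have h1 := hq_near i s hs
        have h2 := hq0_near i s hs
        show sgn i ≤ (∑ j, b j * φ j s) + ∑ j, b₀ j * φ j s
        linarith
      calc sgn i * (xhat (nbhd (t i) ε)).toReal
          = (xhat (nbhd (t i) ε)).toReal • sgn i := by rw [smul_eq_mul]; ring
        _ = ∫ _ in nbhd (t i) ε, sgn i ∂xhat := hconst.symm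
        _ ≤ _ := hmono
    have h3 : 0 ≤ ∫ s in I1 \ Tε, (Q s + Q0 s) ∂xhat := by
      refine setIntegral_nonneg (hI1m.diff hTεm) ?_
      intro s hs
      have h1 := hq_far s hs
      have h2 := abs_le.1 (hq0_far s hs)
      show (0:ℝ) ≤ (∑ j, b j * φ j s) + ∑ j, b₀ j * φ j s
      linarith [h2.1]
    calc ∑ i, sgn i * (xhat (nbhd (t i) ε)).toReal
        ≤ ∑ i, ∫ s in nbhd (t i) ε, (Q s + Q0 s) ∂xhat := Finset.sum_le_sum fun i _ => h2 i
      _ = ∫ s in Tε, (Q s + Q0 s) ∂xhat := h1.symm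
      _ ≤ ∫ s in Tε, (Q s + Q0 s) ∂xhat + ∫ s in I1 \ Tε, (Q s + Q0 s) ∂xhat :=
          le_add_of_nonneg_right h3
      _ = ∫ s in I1, (Q s + Q0 s) ∂xhat := hsplit
  -- evaluate the right-hand side
  have hval : ∫ s in I1, (Q s + Q0 s) ∂xhat
      = ∑ j, b j * v j + ∑ j, b₀ j * v j + ∑ i, a i * sgn i := by
    rw [integral_add hQint hQ0int, hQA, hQ0A, hbA, hb0A]
    ring
  -- Cauchy-Schwarz bounds
  have hCS : ∀ c : Fin m → ℝ,
      ∑ j, c j * v j ≤ Real.sqrt (∑ j, (c j) ^ 2) * (2 * δ') := by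
    intro c
    calc ∑ j, c j * v j
        ≤ Real.sqrt (∑ j, (c j) ^ 2) * Real.sqrt (∑ j, (v j) ^ 2) :=
          Real.sum_mul_le_sqrt_mul_sqrt _ _ _
      _ ≤ Real.sqrt (∑ j, (c j) ^ 2) * (2 * δ') :=
          mul_le_mul_of_nonneg_left hfeas' (Real.sqrt_nonneg _)
  -- put everything together
  have habs : ∑ i, |(xhat (nbhd (t i) ε)).toReal - a i|
      = ∑ i, sgn i * (xhat (nbhd (t i) ε)).toReal - ∑ i, a i * sgn i := by
    rw [← Finset.sum_sub_distrib]
    exact Finset.sum_congr rfl fun i _ => by rw [← hsgn i]; ring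
  rw [habs]
  have := key
  rw [hval] at this
  have hfinal : ∑ i, sgn i * (xhat (nbhd (t i) ε)).toReal - ∑ i, a i * sgn i
      ≤ ∑ j, b j * v j + ∑ j, b₀ j * v j := by linarith
  calc ∑ i, sgn i * (xhat (nbhd (t i) ε)).toReal - ∑ i, a i * sgn i
      ≤ ∑ j, b j * v j + ∑ j, b₀ j * v j := hfinal
    _ ≤ Real.sqrt (∑ j, (b j) ^ 2) * (2 * δ') + Real.sqrt (∑ j, (b₀ j) ^ 2) * (2 * δ') :=
        add_le_add (hCS b) (hCS b₀)
    _ = 2 * (Real.sqrt (∑ j, (b j) ^ 2) + Real.sqrt (∑ j, (b₀ j) ^ 2)) * δ' := by ring
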